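/- arXiv:1612.04766 — 2 statements merged into one kernel-verified Lean document; each statement's English description precedes it below -/
import Mathlib

section
/- Let (A,B) be a suitable pair of k-tuples with compound sequence (g_0,...,g_k), and fix 0≤j≤k. Write n = Σ_{i=0}^k n_i·g_i in the unique normal form with 0≤n_i<b_{i+1} for i<j and 0≤n_i<a_i for i>j. Then n is a positive integer not representable as a nonnegative integer combination of g_0,...,g_k if and only if 1 ≤ −n_j ≤ (Σ_{i≠j} n_i·g_i)/g_j. -/
open Finset

/-- The compound sequence: `g k A B i = b₁⋯bᵢ · aᵢ₊₁⋯a_k` (0-indexed: `A j = a_{j+1}`,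
`B j = b_{j+1}`). -/
def compoundSeq (k : ℕ) (A B : ℕ → ℕ) (i : ℕ) : ℕ :=
  (∏ j ∈ Finset.range i, B j) * (∏ j ∈ Finset.Ico i k, A j)

lemma cs_zero (A B : ℕ → ℕ) : compoundSeq 0 A B 0 = 1 := by simp [compoundSeq]

lemma cs_top (k : ℕ) (A B : ℕ → ℕ) (i : ℕ) (h : i ≤ k) :
    compoundSeq (k+1) A B i = compoundSeq k A B i * A k := by
  unfold compoundSeq
  rw [Finset.prod_Ico_succ_top h]; ring

lemma cs_last (k : ℕ) (A B : ℕ → ℕ) :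
    compoundSeq (k+1) A B (k+1) = ∏ t ∈ range (k+1), B t := by
  simp [compoundSeq]

lemma cs_shift (k : ℕ) (A B : ℕ → ℕ) (i : ℕ) :
    compoundSeq (k+1) A B (i+1)
      = B 0 * compoundSeq k (fun t => A (t+1)) (fun t => B (t+1)) i := by
  unfold compoundSeq
  rw [Finset.prod_range_succ']
  have h1 : ∏ t ∈ Finset.Ico (i+1) (k+1), A t
      = ∏ t ∈ Finset.Ico i k, A (t+1) := by
    rw [Finset.prod_Ico_eq_prod_range, Finset.prod_Ico_eq_prod_range]
    simp only [Nat.add_sub_add_right]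
    apply Finset.prod_congr rfl
    intro x _; congr 1; omega
  rw [h1]; ring

lemma cs_step (k : ℕ) (A B : ℕ → ℕ) (i : ℕ) (h : i < k) :
    A i * compoundSeq k A B (i+1) = B i * compoundSeq k A B i := by
  unfold compoundSeq
  rw [Finset.prod_range_succ, Finset.prod_eq_prod_Ico_succ_bot h]
  ring

lemma key (k : ℕ) (A B : ℕ → ℕ)
    (hA : ∀ i, i < k → 0 < A i) (hB : ∀ i, i < k → 0 < B i)
    (hsuit : ∀ i j, j ≤ i → i < k → Nat.Coprime (A i) (B j))
    (j : ℕ) (hj : j ≤ k) (c d : ℕ → ℤ)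
    (hlo : ∀ i, i < j → 0 ≤ c i ∧ c i < B i)
    (hhi : ∀ i, j < i → i ≤ k → 0 ≤ c i ∧ c i < A (i-1))
    (hd : ∀ i, 0 ≤ d i)
    (hsum : ∑ i ∈ range (k+1), c i * (compoundSeq k A B i : ℤ)
          = ∑ i ∈ range (k+1), d i * (compoundSeq k A B i : ℤ)) :
    0 ≤ c j := by
  induction k generalizing A B j c d with
  | zero =>
    interval_cases j
    rw [Finset.sum_range_one, Finset.sum_range_one, cs_zero] at hsum
    simp only [Nat.cast_one, mul_one] at hsum
    rw [hsum]; exact hd 0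
  | succ k ih =>
    rcases Nat.lt_or_ge j (k+1) with hjk | hjk
    · -- top peel
      have hjk' : j ≤ k := by omega
      have hAk : 0 < A k := hA k (by omega)
      -- divisibility
      have hrearr : ∑ i ∈ range (k+1), (c i - d i) * (compoundSeq (k+1) A B i : ℤ)
          = (d (k+1) - c (k+1)) * (compoundSeq (k+1) A B (k+1) : ℤ) := by
        have e1 := Finset.sum_range_succ (fun i => c i * (compoundSeq (k+1) A B i : ℤ)) (k+1)
        have e2 := Finset.sum_range_succ (fun i => d i * (compoundSeq (k+1) A B i : ℤ)) (k+1)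
        rw [e1, e2] at hsum
        simp only [sub_mul]
        rw [Finset.sum_sub_distrib]
        linarith [hsum]
      have hdvd : (A k : ℤ) ∣ (d (k+1) - c (k+1)) * (compoundSeq (k+1) A B (k+1) : ℤ) := by
        rw [← hrearr]
        apply Finset.dvd_sum
        intro i hi
        rw [cs_top k A B i (by simpa using Nat.lt_succ_iff.mp (Finset.mem_range.mp hi))]
        push_cast
        exact ⟨(c i - d i) * (compoundSeq k A B i : ℤ), by ring⟩
      have hcop : Nat.Coprime (A k) (compoundSeq (k+1) A B (k+1)) := by
        rw [cs_last]
        exact Nat.Coprime.prod_right fun t ht =>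
          hsuit k t (Nat.lt_succ_iff.mp (Finset.mem_range.mp ht)) (by omega)
      have hdvd2 : (A k : ℤ) ∣ (d (k+1) - c (k+1)) :=
        (Nat.isCoprime_iff_coprime.mpr hcop).dvd_of_dvd_mul_right hdvd
      obtain ⟨t, ht⟩ := hdvd2
      have hcK1 : 0 ≤ c (k+1) := (hhi (k+1) (by omega) le_rfl).1
      have hcK2 : c (k+1) < A k := by simpa using (hhi (k+1) (by omega) le_rfl).2
      have hAk' : (0:ℤ) < (A k : ℤ) := by exact_mod_cast hAk
      have ht0 : 0 ≤ t := by
        by_contra h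
        push_neg at h
        have h1 : t ≤ -1 := by omega
        have h2 : (A k:ℤ) * t ≤ (A k:ℤ) * (-1) :=
          mul_le_mul_of_nonneg_left h1 (le_of_lt hAk')
        have := hd (k+1)
        linarith
      set d' : ℕ → ℤ := fun i => if i = k then d k + t * (B k : ℤ) else d i with hd'def
      have hd' : ∀ i, 0 ≤ d' i := by
        intro i
        simp only [hd'def]
        split
        · have := hd k
          have : (0:ℤ) ≤ t * (B k : ℤ) := mul_nonneg ht0 (by positivity)
          linarith [hd k]
        · exact hd i
      have hstep : (A k : ℤ) * (compoundSeq (k+1) A B (k+1) : ℤ)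
          = (B k : ℤ) * (compoundSeq (k+1) A B k : ℤ) := by
        exact_mod_cast congrArg (Nat.cast : ℕ → ℤ) (cs_step (k+1) A B k (by omega))
      have hnew : ∑ i ∈ range (k+1), c i * (compoundSeq k A B i : ℤ)
          = ∑ i ∈ range (k+1), d' i * (compoundSeq k A B i : ℤ) := by
        have hc0 : (A k : ℤ) ≠ 0 := ne_of_gt hAk'
        apply mul_left_cancel₀ hc0
        rw [Finset.mul_sum, Finset.mul_sum]
        have l1 : ∀ i ∈ range (k+1), (A k:ℤ) * (c i * (compoundSeq k A B i : ℤ))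
            = c i * (compoundSeq (k+1) A B i : ℤ) := by
          intro i hi
          rw [cs_top k A B i (Nat.lt_succ_iff.mp (Finset.mem_range.mp hi))]
          push_cast; ring
        have l2 : ∀ i ∈ range (k+1), (A k:ℤ) * (d' i * (compoundSeq k A B i : ℤ))
            = d' i * (compoundSeq (k+1) A B i : ℤ) := by
          intro i hi
          rw [cs_top k A B i (Nat.lt_succ_iff.mp (Finset.mem_range.mp hi))]
          push_cast; ring
        rw [Finset.sum_congr rfl l1, Finset.sum_congr rfl l2]
        have hd'eq : ∑ i ∈ range (k+1), d' i * (compoundSeq (k+1) A B i : ℤ)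
            = ∑ i ∈ range (k+1), d i * (compoundSeq (k+1) A B i : ℤ)
              + t * (B k : ℤ) * (compoundSeq (k+1) A B k : ℤ) := by
          rw [Finset.sum_range_succ, Finset.sum_range_succ]
          have : ∑ i ∈ range k, d' i * (compoundSeq (k+1) A B i : ℤ)
              = ∑ i ∈ range k, d i * (compoundSeq (k+1) A B i : ℤ) := by
            apply Finset.sum_congr rfl
            intro i hi
            have : i ≠ k := by have := Finset.mem_range.mp hi; omega
            simp [hd'def, this]
          rw [this]
          simp only [hd'def, if_pos rfl]
          ring
        rw [hd'eq]
        have hsub := Finset.sum_sub_distrib (s := range (k+1))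
          (f := fun i => c i * (compoundSeq (k+1) A B i : ℤ))
          (g := fun i => d i * (compoundSeq (k+1) A B i : ℤ))
        simp only [sub_mul] at hrearr
        rw [hsub] at hrearr
        have hts : (d (k+1) - c (k+1)) * (compoundSeq (k+1) A B (k+1) : ℤ)
            = t * (B k : ℤ) * (compoundSeq (k+1) A B k : ℤ) := by
          rw [ht]
          calc (A k:ℤ) * t * (compoundSeq (k+1) A B (k+1) : ℤ)
              = t * ((A k:ℤ) * (compoundSeq (k+1) A B (k+1) : ℤ)) := by ring
            _ = t * ((B k:ℤ) * (compoundSeq (k+1) A B k : ℤ)) := by rw [hstep]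
            _ = t * (B k : ℤ) * (compoundSeq (k+1) A B k : ℤ) := by ring
        rw [← sub_mul] at hrearr
        rw [hts] at hrearr
        linarith [hrearr]
      exact ih A B (fun i hi => hA i (by omega)) (fun i hi => hB i (by omega))
        (fun a b hb ha => hsuit a b hb (by omega)) j hjk' c d' hlo
        (fun i h1 h2 => hhi i h1 (by omega)) hd' hnew
    · have hjK : j = k + 1 := by omega
      subst hjK
      have hB0 : 0 < B 0 := hB 0 (by omega)
      have hB0' : (0:ℤ) < (B 0 : ℤ) := by exact_mod_cast hB0
      have e1 := Finset.sum_range_succ' (fun i => c i * (compoundSeq (k+1) A B i : ℤ)) (k+1)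
      have e2 := Finset.sum_range_succ' (fun i => d i * (compoundSeq (k+1) A B i : ℤ)) (k+1)
      rw [e1, e2] at hsum
      -- hsum : (∑ i ∈ range (k+1), c (i+1) * g (i+1)) + c 0 * g 0
      --      = (∑ i ∈ range (k+1), d (i+1) * g (i+1)) + d 0 * g 0
      have hrearr : (d 0 - c 0) * (compoundSeq (k+1) A B 0 : ℤ)
          = ∑ i ∈ range (k+1), (c (i+1) - d (i+1)) * (compoundSeq (k+1) A B (i+1) : ℤ) := by
        simp only [sub_mul]
        rw [Finset.sum_sub_distrib]
        linarith [hsum]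
      have hdvd : (B 0 : ℤ) ∣ (d 0 - c 0) * (compoundSeq (k+1) A B 0 : ℤ) := by
        rw [hrearr]
        apply Finset.dvd_sum
        intro i hi
        rw [cs_shift k A B i]
        push_cast
        exact ⟨(c (i+1) - d (i+1)) * (compoundSeq k (fun t => A (t+1)) (fun t => B (t+1)) i : ℤ),
          by ring⟩
      have hcop : Nat.Coprime (B 0) (compoundSeq (k+1) A B 0) := by
        have : compoundSeq (k+1) A B 0 = ∏ t ∈ Finset.Ico 0 (k+1), A t := by
          simp [compoundSeq]
        rw [this]
        exact Nat.Coprime.prod_right fun t ht =>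
          (hsuit t 0 (Nat.zero_le t) (by simpa using (Finset.mem_Ico.mp ht).2)).symm
      have hdvd2 : (B 0 : ℤ) ∣ (d 0 - c 0) :=
        (Nat.isCoprime_iff_coprime.mpr hcop).dvd_of_dvd_mul_right hdvd
      obtain ⟨t, ht⟩ := hdvd2
      have hc01 : 0 ≤ c 0 := (hlo 0 (by omega)).1
      have hc02 : c 0 < B 0 := (hlo 0 (by omega)).2
      have ht0 : 0 ≤ t := by
        by_contra h
        push_neg at h
        have h1 : t ≤ -1 := by omega
        have h2 : (B 0:ℤ) * t ≤ (B 0:ℤ) * (-1) :=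
          mul_le_mul_of_nonneg_left h1 (le_of_lt hB0')
        have := hd 0
        linarith
      set A' : ℕ → ℕ := fun i => A (i+1) with hA'def
      set B' : ℕ → ℕ := fun i => B (i+1) with hB'def
      set c' : ℕ → ℤ := fun i => c (i+1) with hc'def
      set d' : ℕ → ℤ := fun i => if i = 0 then d 1 + t * (A 0 : ℤ) else d (i+1) with hd'def
      have hd'nn : ∀ i, 0 ≤ d' i := by
        intro i
        simp only [hd'def]
        split
        · have h1 : (0:ℤ) ≤ t * (A 0 : ℤ) := mul_nonneg ht0 (by positivity)
          linarith [hd 1]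
        · exact hd (i+1)
      have hstep : (A 0 : ℤ) * (compoundSeq (k+1) A B 1 : ℤ)
          = (B 0 : ℤ) * (compoundSeq (k+1) A B 0 : ℤ) := by
        exact_mod_cast congrArg (Nat.cast : ℕ → ℤ) (cs_step (k+1) A B 0 (by omega))
      have hnew : ∑ i ∈ range (k+1), c' i * (compoundSeq k A' B' i : ℤ)
          = ∑ i ∈ range (k+1), d' i * (compoundSeq k A' B' i : ℤ) := by
        have hc0 : (B 0 : ℤ) ≠ 0 := ne_of_gt hB0'
        apply mul_left_cancel₀ hc0
        rw [Finset.mul_sum, Finset.mul_sum]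
        have l1 : ∀ i ∈ range (k+1), (B 0:ℤ) * (c' i * (compoundSeq k A' B' i : ℤ))
            = c (i+1) * (compoundSeq (k+1) A B (i+1) : ℤ) := by
          intro i hi
          rw [cs_shift k A B i]
          push_cast
          simp only [hc'def]
          ring
        have l2 : ∀ i ∈ range (k+1), (B 0:ℤ) * (d' i * (compoundSeq k A' B' i : ℤ))
            = d' i * (compoundSeq (k+1) A B (i+1) : ℤ) := by
          intro i hi
          rw [cs_shift k A B i]
          push_cast
          ring
        rw [Finset.sum_congr rfl l1, Finset.sum_congr rfl l2]
        have hd'eq : ∑ i ∈ range (k+1), d' i * (compoundSeq (k+1) A B (i+1) : ℤ)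
            = ∑ i ∈ range (k+1), d (i+1) * (compoundSeq (k+1) A B (i+1) : ℤ)
              + t * (A 0 : ℤ) * (compoundSeq (k+1) A B 1 : ℤ) := by
          rw [Finset.sum_range_succ' (fun i => d' i * (compoundSeq (k+1) A B (i+1) : ℤ)) k,
            Finset.sum_range_succ' (fun i => d (i+1) * (compoundSeq (k+1) A B (i+1) : ℤ)) k]
          have : ∑ i ∈ range k, d' (i+1) * (compoundSeq (k+1) A B (i+1+1) : ℤ)
              = ∑ i ∈ range k, d (i+1+1) * (compoundSeq (k+1) A B (i+1+1) : ℤ) := by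
            apply Finset.sum_congr rfl
            intro i hi
            simp [hd'def]
          rw [this]
          simp only [hd'def, if_pos rfl]
          ring
        rw [hd'eq]
        have hts : t * (A 0 : ℤ) * (compoundSeq (k+1) A B 1 : ℤ)
            = (d 0 - c 0) * (compoundSeq (k+1) A B 0 : ℤ) := by
          rw [ht]
          calc t * (A 0:ℤ) * (compoundSeq (k+1) A B 1 : ℤ)
              = t * ((A 0:ℤ) * (compoundSeq (k+1) A B 1 : ℤ)) := by ring
            _ = t * ((B 0:ℤ) * (compoundSeq (k+1) A B 0 : ℤ)) := by rw [hstep]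
            _ = (B 0:ℤ) * t * (compoundSeq (k+1) A B 0 : ℤ) := by ring
        rw [hts]
        linarith [hsum]
      have hres := ih A' B' (fun i hi => hA (i+1) (by omega)) (fun i hi => hB (i+1) (by omega))
        (fun a b hb ha => hsuit (a+1) (b+1) (by omega) (by omega)) k le_rfl c' d'
        (fun i hik => hlo (i+1) (by omega)) (fun i h1 h2 => absurd h1 (by omega)) hd'nn hnew
      simpa [hc'def] using hres

/-- An integer `n`, written in the unique normal form relative to index `j`, is a positive
integer not representable as a nonnegative integer combination of the `gᵢ` if and only if
`1 ≤ -n_j ≤ (Σ_{i ≠ j} nᵢ gᵢ)/g_j`. -/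
theorem nonrepresentable_characterization (k : ℕ) (A B : ℕ → ℕ)
    (hA : ∀ i, i < k → 0 < A i) (hB : ∀ i, i < k → 0 < B i)
    (hsuit : ∀ i j, j ≤ i → i < k → Nat.Coprime (A i) (B j))
    (n : ℤ) (j : ℕ) (hj : j ≤ k)
    (c : Fin (k + 1) → ℤ)
    (hc1 : ∀ i : Fin (k + 1), (i : ℕ) < j → 0 ≤ c i ∧ c i < B (i : ℕ))
    (hc2 : ∀ i : Fin (k + 1), j < (i : ℕ) → 0 ≤ c i ∧ c i < A ((i : ℕ) - 1))
    (hn : n = ∑ i : Fin (k + 1), c i * (compoundSeq k A B (i : ℕ) : ℤ)) :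
    (0 < n ∧ ¬ ∃ d : Fin (k + 1) → ℕ,
        n = ∑ i : Fin (k + 1), (d i : ℤ) * (compoundSeq k A B (i : ℕ) : ℤ)) ↔
      (1 ≤ -c ⟨j, by omega⟩ ∧
        (-c ⟨j, by omega⟩) * (compoundSeq k A B j : ℤ) ≤
          ∑ i ∈ Finset.univ.erase (⟨j, by omega⟩ : Fin (k + 1)),
            c i * (compoundSeq k A B (i : ℕ) : ℤ)) := by
  set jf : Fin (k+1) := ⟨j, by omega⟩ with hjf
  set cN : ℕ → ℤ := fun i => if h : i < k+1 then c ⟨i, h⟩ else 0 with hcN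
  have hsum_eq : ∑ i : Fin (k+1), c i * (compoundSeq k A B (i:ℕ) : ℤ)
      = ∑ i ∈ range (k+1), cN i * (compoundSeq k A B i : ℤ) := by
    rw [← Fin.sum_univ_eq_sum_range (fun i => cN i * (compoundSeq k A B i : ℤ)) (k+1)]
    apply Finset.sum_congr rfl
    intro i _
    simp [hcN, i.isLt, i.is_le]
  have herase : ∑ i ∈ Finset.univ.erase jf, c i * (compoundSeq k A B (i:ℕ) : ℤ)
      = n - c jf * (compoundSeq k A B j : ℤ) := by
    have h := Finset.add_sum_erase Finset.univ
      (fun i : Fin (k+1) => c i * (compoundSeq k A B (i:ℕ) : ℤ)) (Finset.mem_univ jf)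
    rw [hn]
    have hjv : ((jf : Fin (k+1)) : ℕ) = j := rfl
    simp only [hjv] at h
    linarith [h]
  have hRHS2 : ((-c jf) * (compoundSeq k A B j : ℤ) ≤
      ∑ i ∈ Finset.univ.erase jf, c i * (compoundSeq k A B (i:ℕ) : ℤ)) ↔ 0 ≤ n := by
    rw [herase]
    constructor <;> intro h <;> nlinarith [h]
  have hlo : ∀ i, i < j → 0 ≤ cN i ∧ cN i < B i := by
    intro i hi
    have hik : i < k + 1 := by omega
    simpa [hcN, hik, show i ≤ k by omega] using hc1 ⟨i, hik⟩ hi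
  have hhi : ∀ i, j < i → i ≤ k → 0 ≤ cN i ∧ cN i < A (i-1) := by
    intro i h1 h2
    have hik : i < k + 1 := by omega
    simpa [hcN, hik, show i ≤ k by omega] using hc2 ⟨i, hik⟩ h1
  have hcNj : cN j = c jf := by simp [hcN, show j < k+1 by omega, show j ≤ k by omega, hjf]
  have happly : ∀ dN : ℕ → ℤ, (∀ i, 0 ≤ dN i) →
      n = ∑ i ∈ range (k+1), dN i * (compoundSeq k A B i : ℤ) → 0 ≤ c jf := by
    intro dN hdN hdsum
    rw [← hcNj]
    exact key k A B hA hB hsuit j hj cN dN hlo hhi hdN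
      (by rw [← hsum_eq, ← hn, hdsum])
  constructor
  · rintro ⟨hpos, hnrep⟩
    constructor
    · by_contra h
      push_neg at h
      have hcj : 0 ≤ c jf := by linarith
      have hall : ∀ i : Fin (k+1), 0 ≤ c i := by
        intro i
        rcases lt_trichotomy (i:ℕ) j with h1 | h1 | h1
        · exact (hc1 i h1).1
        · have : i = jf := Fin.ext h1
          rw [this]; exact hcj
        · exact (hc2 i h1).1
      exact hnrep ⟨fun i => (c i).toNat, by
        rw [hn]
        apply Finset.sum_congr rfl
        intro i _
        rw [Int.toNat_of_nonneg (hall i)]⟩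
    · exact hRHS2.mpr hpos.le
  · rintro ⟨h1, h2⟩
    have hcj : c jf ≤ -1 := by linarith
    have hn0 : 0 ≤ n := hRHS2.mp h2
    constructor
    · rcases hn0.lt_or_eq with h | h
      · exact h
      · exfalso
        have := happly (fun _ => 0) (fun i => le_refl 0) (by simp [← h])
        linarith
    · rintro ⟨d, hd⟩
      have := happly (fun i => if h : i < k+1 then (d ⟨i, h⟩ : ℤ) else 0)
        (by intro i; split <;> simp)
        (by
          rw [hd, ← Fin.sum_univ_eq_sum_range
            (fun i => (if h : i < k+1 then (d ⟨i, h⟩ : ℤ) else 0) * (compoundSeq k A B i : ℤ)) (k+1)]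
          apply Finset.sum_congr rfl
          intro i _
          simp [i.isLt, i.is_le])
      linarith
end

section
/- Tuenter-type identity for compound sequences: for any suitable pair (A,B), any index 0≤j≤k, and any function f defined on the nonnegative integers, Σ_{n∈NR(A,B)} [f(n+g_j) − f(n)] = Σ_{n∈U_{j,0}} f(n) − Σ_{n=0}^{g_j−1} f(n), where U_{j,0} = { Σ_{i≠j} n_i g_i : 0≤n_i<b_{i+1} for i<j, 0≤n_i<a_i for i>j }. -/
open Finset

/-- The bound on the `i`-th coefficient in the normal form relative to `j`, with the `j`-th
coefficient forced to be `0`. -/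
def nfBound (k j : ℕ) (A B : ℕ → ℕ) (i : Fin (k + 1)) : ℕ :=
  if (i : ℕ) < j then B (i : ℕ) else if (i : ℕ) = j then 1 else A ((i : ℕ) - 1)

lemma compound_rel (k : ℕ) (A B : ℕ → ℕ) (m : ℕ) (hm : m < k) :
    A m * compoundSeq k A B (m + 1) = B m * compoundSeq k A B m := by
  unfold compoundSeq
  rw [Finset.prod_range_succ, Finset.prod_eq_prod_Ico_succ_bot hm]
  ring

lemma compound_pos (k : ℕ) (A B : ℕ → ℕ) (hA : ∀ i, i < k → 0 < A i)
    (hB : ∀ i, i < k → 0 < B i) (i : ℕ) (hi : i ≤ k) : 0 < compoundSeq k A B i := by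
  unfold compoundSeq
  exact Nat.mul_pos (Finset.prod_pos fun m hm => hB m (lt_of_lt_of_le (mem_range.mp hm) hi))
    (Finset.prod_pos fun m hm => hA m (mem_Ico.mp hm).2)

lemma shift_sum (k : ℕ) (v c : ℕ → ℕ) (p q a b : ℕ) (hpq : p ≠ q)
    (hp : p ∈ Finset.range (k + 1)) (hq : q ∈ Finset.range (k + 1)) (hb : b ≤ c p) :
    (∑ t ∈ Finset.range (k + 1),
        (if t = p then c p - b else if t = q then c q + a else c t) * v t) + b * v p
      = (∑ t ∈ Finset.range (k + 1), c t * v t) + a * v q := by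
  have h1 : ∀ t ∈ Finset.range (k + 1),
      (if t = p then c p - b else if t = q then c q + a else c t) * v t
          + (if t = p then b * v p else 0)
        = c t * v t + (if t = q then a * v q else 0) := by
    intro t _
    by_cases h1 : t = p
    · subst h1
      rw [if_pos rfl, if_pos rfl, if_neg hpq, ← add_mul, Nat.sub_add_cancel hb, add_zero]
    · rw [if_neg h1, if_neg h1]
      by_cases h2 : t = q
      · subst h2; rw [if_pos rfl, if_pos rfl, add_mul, add_zero]
      · simp [h2]
  calc (∑ t ∈ Finset.range (k + 1),
        (if t = p then c p - b else if t = q then c q + a else c t) * v t) + b * v p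
      = ∑ t ∈ Finset.range (k + 1),
          ((if t = p then c p - b else if t = q then c q + a else c t) * v t
            + (if t = p then b * v p else 0)) := by
        rw [Finset.sum_add_distrib, Finset.sum_ite_eq' (Finset.range (k + 1)) p
          (fun _ => b * v p), if_pos hp]
    _ = ∑ t ∈ Finset.range (k + 1), (c t * v t + (if t = q then a * v q else 0)) :=
        Finset.sum_congr rfl h1
    _ = (∑ t ∈ Finset.range (k + 1), c t * v t) + a * v q := by
        rw [Finset.sum_add_distrib, Finset.sum_ite_eq' (Finset.range (k + 1)) q
          (fun _ => a * v q), if_pos hq]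

lemma reduce (k : ℕ) (A B : ℕ → ℕ) (j : ℕ) (hj : j ≤ k)
    (hA : ∀ i, i < k → 0 < A i) (hB : ∀ i, i < k → 0 < B i) (c : ℕ → ℕ) :
    ∃ d : ℕ → ℕ, (∀ i, i < j → d i < B i) ∧ (∀ i, j < i → i ≤ k → d i < A (i - 1)) ∧
      ∑ t ∈ Finset.range (k + 1), d t * compoundSeq k A B t
        = ∑ t ∈ Finset.range (k + 1), c t * compoundSeq k A B t := by
  set N : ℕ := 2 + ∑ m ∈ Finset.range k, (A m + B m) with hN
  have hNA : ∀ m, m < k → A m < N := by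
    intro m hm
    have : A m + B m ≤ ∑ m ∈ Finset.range k, (A m + B m) :=
      Finset.single_le_sum (f := fun m => A m + B m) (fun _ _ => Nat.zero_le _)
        (Finset.mem_range.mpr hm)
    omega
  have hNB : ∀ m, m < k → B m < N := by
    intro m hm
    have : A m + B m ≤ ∑ m ∈ Finset.range k, (A m + B m) :=
      Finset.single_le_sum (f := fun m => A m + B m) (fun _ _ => Nat.zero_le _)
        (Finset.mem_range.mpr hm)
    omega
  have hN2 : 2 ≤ N := by omega
  set W : ℕ → ℕ := fun i => if i = j then 0 else N ^ (if i < j then j - i else i - j) with hW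
  clear_value N
  suffices H : ∀ μ (c : ℕ → ℕ), (∑ t ∈ Finset.range (k + 1), c t * W t) = μ →
      ∃ d : ℕ → ℕ, (∀ i, i < j → d i < B i) ∧ (∀ i, j < i → i ≤ k → d i < A (i - 1)) ∧
      ∑ t ∈ Finset.range (k + 1), d t * compoundSeq k A B t
        = ∑ t ∈ Finset.range (k + 1), c t * compoundSeq k A B t by
    exact H _ c rfl
  intro μ
  induction μ using Nat.strong_induction_on with
  | _ μ IH =>
    intro c hμ
    by_cases hgood : (∀ i, i < j → c i < B i) ∧ (∀ i, j < i → i ≤ k → c i < A (i - 1))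
    · exact ⟨c, hgood.1, hgood.2, rfl⟩
    rw [not_and_or] at hgood
    rcases hgood with hlow | hhigh
    · -- low case: some i < j with B i ≤ c i
      push_neg at hlow
      obtain ⟨i, hij, hci⟩ := hlow
      have hik : i < k := lt_of_lt_of_le hij hj
      set c' : ℕ → ℕ := fun t => if t = i then c i - B i else if t = i + 1 then c (i + 1) + A i
        else c t with hc'
      have hpq : i ≠ i + 1 := by omega
      have hp : i ∈ Finset.range (k + 1) := Finset.mem_range.mpr (by omega)
      have hq : i + 1 ∈ Finset.range (k + 1) := Finset.mem_range.mpr (by omega)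
      have hsum : (∑ t ∈ Finset.range (k + 1), c' t * compoundSeq k A B t)
          + B i * compoundSeq k A B i
          = (∑ t ∈ Finset.range (k + 1), c t * compoundSeq k A B t)
            + A i * compoundSeq k A B (i + 1) :=
        shift_sum k _ c i (i + 1) (A i) (B i) hpq hp hq hci
      rw [compound_rel k A B i hik] at hsum
      have hsum' : (∑ t ∈ Finset.range (k + 1), c' t * compoundSeq k A B t)
          = ∑ t ∈ Finset.range (k + 1), c t * compoundSeq k A B t := by omega
      have hμsum : (∑ t ∈ Finset.range (k + 1), c' t * W t) + B i * W i
          = (∑ t ∈ Finset.range (k + 1), c t * W t) + A i * W (i + 1) :=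
        shift_sum k W c i (i + 1) (A i) (B i) hpq hp hq hci
      have hWi : W i = N ^ (j - i) := by
        rw [hW]; simp only [if_neg (by omega : ¬ i = j), if_pos hij]
      have hlt : A i * W (i + 1) < B i * W i := by
        rw [hWi]
        by_cases hij1 : i + 1 = j
        · have : W (i + 1) = 0 := by rw [hW]; simp [hij1]
          rw [this, Nat.mul_zero]
          exact Nat.mul_pos (hB i hik) (Nat.pow_pos (by omega))
        · have hij1' : i + 1 < j := by omega
          have : W (i + 1) = N ^ (j - i - 1) := by
            rw [hW]; simp only [if_neg hij1, if_pos hij1']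
            congr 1
          rw [this]
          have h1 : A i * N ^ (j - i - 1) < N * N ^ (j - i - 1) :=
            (Nat.mul_lt_mul_right (Nat.pow_pos (by omega))).mpr (hNA i hik)
          have h2 : N * N ^ (j - i - 1) = N ^ (j - i) := by
            rw [← pow_succ']; congr 1; omega
          calc A i * N ^ (j - i - 1) < N ^ (j - i) := lt_of_lt_of_eq h1 h2
            _ ≤ B i * N ^ (j - i) := Nat.le_mul_of_pos_left _ (hB i hik)
      have hμlt : (∑ t ∈ Finset.range (k + 1), c' t * W t) < μ := by omega
      obtain ⟨d, hd1, hd2, hd3⟩ := IH _ hμlt c' rfl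
      exact ⟨d, hd1, hd2, hd3.trans hsum'⟩
    · -- high case: some i with j < i ≤ k and A (i-1) ≤ c i
      push_neg at hhigh
      obtain ⟨i, hji, hik, hci⟩ := hhigh
      set m' := i - 1 with hm'
      have him : i = m' + 1 := by omega
      have hm'k : m' < k := by omega
      set c' : ℕ → ℕ := fun t => if t = i then c i - A m' else if t = m' then c m' + B m'
        else c t with hc'
      have hpq : i ≠ m' := by omega
      have hp : i ∈ Finset.range (k + 1) := Finset.mem_range.mpr (by omega)
      have hq : m' ∈ Finset.range (k + 1) := Finset.mem_range.mpr (by omega)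
      have hsum : (∑ t ∈ Finset.range (k + 1), c' t * compoundSeq k A B t)
          + A m' * compoundSeq k A B i
          = (∑ t ∈ Finset.range (k + 1), c t * compoundSeq k A B t)
            + B m' * compoundSeq k A B m' :=
        shift_sum k _ c i m' (B m') (A m') hpq hp hq hci
      rw [him, compound_rel k A B m' hm'k] at hsum
      have hsum' : (∑ t ∈ Finset.range (k + 1), c' t * compoundSeq k A B t)
          = ∑ t ∈ Finset.range (k + 1), c t * compoundSeq k A B t := by omega
      have hμsum : (∑ t ∈ Finset.range (k + 1), c' t * W t) + A m' * W i
          = (∑ t ∈ Finset.range (k + 1), c t * W t) + B m' * W m' :=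
        shift_sum k W c i m' (B m') (A m') hpq hp hq hci
      have hWi : W i = N ^ (i - j) := by
        rw [hW]; simp only [if_neg (by omega : ¬ i = j), if_neg (by omega : ¬ i < j)]
      have hlt : B m' * W m' < A m' * W i := by
        rw [hWi]
        by_cases hmj : m' = j
        · have : W m' = 0 := by rw [hW]; simp [hmj]
          rw [this, Nat.mul_zero]
          exact Nat.mul_pos (hA m' hm'k) (Nat.pow_pos (by omega))
        · have hjm : j < m' := by omega
          have : W m' = N ^ (i - j - 1) := by
            rw [hW]; simp only [if_neg hmj, if_neg (by omega : ¬ m' < j)]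
            congr 1; omega
          rw [this]
          have h1 : B m' * N ^ (i - j - 1) < N * N ^ (i - j - 1) :=
            (Nat.mul_lt_mul_right (Nat.pow_pos (by omega))).mpr (hNB m' hm'k)
          have h2 : N * N ^ (i - j - 1) = N ^ (i - j) := by
            rw [← pow_succ']; congr 1; omega
          calc B m' * N ^ (i - j - 1) < N ^ (i - j) := lt_of_lt_of_eq h1 h2
            _ ≤ A m' * N ^ (i - j) := Nat.le_mul_of_pos_left _ (hA m' hm'k)
      have hμlt : (∑ t ∈ Finset.range (k + 1), c' t * W t) < μ := by omega
      obtain ⟨d, hd1, hd2, hd3⟩ := IH _ hμlt c' rfl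
      exact ⟨d, hd1, hd2, hd3.trans hsum'⟩

lemma bezout_zmod (m : ℕ) (g : ℕ → ℕ) (s : Finset ℕ) :
    ∃ x : ℕ → ZMod m, ((s.gcd g : ℕ) : ZMod m) = ∑ i ∈ s, x i * (g i : ZMod m) := by
  induction s using Finset.induction with
  | empty => exact ⟨0, by simp⟩
  | @insert a s ha IH =>
    obtain ⟨x, hx⟩ := IH
    set α : ZMod m := ((Nat.gcdA (g a) (s.gcd g) : ℤ) : ZMod m) with hα
    set β : ZMod m := ((Nat.gcdB (g a) (s.gcd g) : ℤ) : ZMod m) with hβ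
    refine ⟨fun i => if i = a then α else β * x i, ?_⟩
    have hgi : (insert a s).gcd g = Nat.gcd (g a) (s.gcd g) := by
      rw [Finset.gcd_insert]; rfl
    have hb := Nat.gcd_eq_gcd_ab (g a) (s.gcd g)
    have hcast : ((Nat.gcd (g a) (s.gcd g) : ℕ) : ZMod m)
        = (g a : ZMod m) * α + ((s.gcd g : ℕ) : ZMod m) * β := by
      have h2 := congrArg (fun z : ℤ => (z : ZMod m)) hb
      push_cast at h2
      rw [hα, hβ]
      exact_mod_cast h2
    rw [hgi, Finset.sum_insert ha, hcast]
    beta_reduce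
    have hs : ∑ i ∈ s, (if i = a then α else β * x i) * (g i : ZMod m)
        = β * ∑ i ∈ s, x i * (g i : ZMod m) := by
      rw [Finset.mul_sum]
      refine Finset.sum_congr rfl fun i hi => ?_
      rw [if_neg (by rintro rfl; exact ha hi)]
      ring
    rw [if_pos rfl, hs, ← hx]
    ring

lemma gcd_all_eq_one (k : ℕ) (A B : ℕ → ℕ)
    (hsuit : ∀ i j, j ≤ i → i < k → Nat.Coprime (A i) (B j))
    (d : ℕ) (hd : ∀ i, i ≤ k → d ∣ compoundSeq k A B i) : d = 1 := by
  by_contra hd1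
  obtain ⟨p, hp, hpd⟩ := Nat.exists_prime_and_dvd hd1
  have h0 : p ∣ ∏ m ∈ Finset.range k, A m := by
    have h := hpd.trans (hd 0 (Nat.zero_le k))
    unfold compoundSeq at h
    simpa [← Finset.range_eq_Ico] using h
  obtain ⟨m0, hm0, hpm0⟩ := hp.prime.exists_mem_finset_dvd h0
  rw [Finset.mem_range] at hm0
  set M := Nat.findGreatest (fun m => p ∣ A m) (k - 1) with hMdef
  have hM : p ∣ A M := Nat.findGreatest_spec (P := fun m => p ∣ A m) (by omega) hpm0
  have hMk : M < k := lt_of_le_of_lt (Nat.findGreatest_le _) (by omega)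
  have hgM : p ∣ compoundSeq k A B (M + 1) := hpd.trans (hd (M + 1) (by omega))
  unfold compoundSeq at hgM
  rcases hp.prime.dvd_mul.mp hgM with h | h
  · obtain ⟨t, ht, hpt⟩ := hp.prime.exists_mem_finset_dvd h
    rw [Finset.mem_range] at ht
    have hco := hsuit M t (by omega) hMk
    have : p ∣ Nat.gcd (A M) (B t) := Nat.dvd_gcd hM hpt
    rw [Nat.Coprime] at hco
    rw [hco] at this
    exact hp.one_lt.ne' (Nat.eq_one_of_dvd_one this)
  · obtain ⟨t, ht, hpt⟩ := hp.prime.exists_mem_finset_dvd h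
    rw [Finset.mem_Ico] at ht
    exact Nat.findGreatest_is_greatest ht.1 (Nat.le_pred_of_lt ht.2) hpt


lemma prod_nfBound (k : ℕ) (A B : ℕ → ℕ) (j : ℕ) (hj : j ≤ k) :
    ∏ i : Fin (k + 1), nfBound k j A B i = compoundSeq k A B j := by
  have h1 : ∏ i : Fin (k + 1), nfBound k j A B i
      = ∏ t ∈ Finset.range (k + 1),
          (if t < j then B t else if t = j then 1 else A (t - 1)) := by
    rw [← Fin.prod_univ_eq_prod_range (fun t => if t < j then B t else if t = j then 1 else A (t - 1)) (k + 1)]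
    rfl
  rw [h1, Finset.range_eq_Ico, ← Finset.prod_Ico_consecutive _ (Nat.zero_le j) (by omega : j ≤ k + 1),
    Finset.prod_eq_prod_Ico_succ_bot (by omega : j < k + 1)]
  have h2 : ∏ t ∈ Finset.Ico 0 j, (if t < j then B t else if t = j then 1 else A (t - 1))
      = ∏ t ∈ Finset.range j, B t := by
    rw [← Finset.range_eq_Ico]
    exact Finset.prod_congr rfl fun t ht => if_pos (Finset.mem_range.mp ht)
  have h3 : (if j < j then B j else if j = j then 1 else A (j - 1)) = 1 := by simp
  have h4 : ∏ t ∈ Finset.Ico (j + 1) (k + 1), (if t < j then B t else if t = j then 1 else A (t - 1))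
      = ∏ t ∈ Finset.Ico j k, A t := by
    rw [Finset.prod_Ico_eq_prod_range, Finset.prod_Ico_eq_prod_range]
    refine Finset.prod_congr (by congr 1; omega) fun t _ => ?_
    rw [if_neg (by omega), if_neg (by omega)]
    congr 1
    omega
  rw [h2, h3, h4, one_mul]
  rfl


/-- Tuenter-type identity for compound sequences:
`Σ_{n ∈ NR(A,B)} [f(n+g_j) − f(n)] = Σ_{n ∈ U_{j,0}} f(n) − Σ_{n=0}^{g_j−1} f(n)`. -/
theorem tuenter_generalization (k : ℕ) (A B : ℕ → ℕ)
    (hA : ∀ i, i < k → 0 < A i) (hB : ∀ i, i < k → 0 < B i)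
    (hsuit : ∀ i j, j ≤ i → i < k → Nat.Coprime (A i) (B j))
    (j : ℕ) (hj : j ≤ k) (f : ℕ → ℝ)
    (NR : Finset ℕ)
    (hNR : ∀ n : ℕ, n ∈ NR ↔
      ¬ ∃ c : Fin (k + 1) → ℕ, n = ∑ i : Fin (k + 1), c i * compoundSeq k A B (i : ℕ)) :
    ∑ n ∈ NR, (f (n + compoundSeq k A B j) - f n) =
      (∑ n ∈ Finset.image
          (fun c : (∀ i : Fin (k + 1), Fin (nfBound k j A B i)) =>
            ∑ i : Fin (k + 1), (c i : ℕ) * compoundSeq k A B (i : ℕ))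
          Finset.univ, f n) -
        ∑ n ∈ Finset.range (compoundSeq k A B j), f n := by
  classical
  set m : ℕ := compoundSeq k A B j with hmdef
  set Ψ : (∀ i : Fin (k + 1), Fin (nfBound k j A B i)) → ℕ :=
    fun c => ∑ i : Fin (k + 1), (c i : ℕ) * compoundSeq k A B (i : ℕ) with hΨ
  have hm0 : 0 < m := compound_pos k A B hA hB j hj
  haveI : NeZero m := ⟨hm0.ne'⟩
  -- conversion between Fin sums and range sums
  have hconv2 : ∀ c : ℕ → ℕ,
      (∑ i : Fin (k + 1), c (i : ℕ) * compoundSeq k A B (i : ℕ))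
        = ∑ t ∈ Finset.range (k + 1), c t * compoundSeq k A B t :=
    fun c => Fin.sum_univ_eq_sum_range (fun t => c t * compoundSeq k A B t) (k + 1)
  have hconv : ∀ c : Fin (k + 1) → ℕ,
      (∑ i : Fin (k + 1), c i * compoundSeq k A B (i : ℕ))
        = ∑ t ∈ Finset.range (k + 1),
            (if h : t < k + 1 then c ⟨t, h⟩ else 0) * compoundSeq k A B t := by
    intro c
    rw [← hconv2 (fun t => if h : t < k + 1 then c ⟨t, h⟩ else 0)]
    exact Finset.sum_congr rfl fun i _ => by rw [dif_pos i.isLt]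
  -- splitting off the j-th coefficient
  have hsplit : ∀ d : ℕ → ℕ,
      (∑ t ∈ Finset.range (k + 1), d t * compoundSeq k A B t)
        = (∑ t ∈ Finset.range (k + 1),
            (if t = j then 0 else d t) * compoundSeq k A B t) + d j * m := by
    intro d
    have h1 : ∀ t ∈ Finset.range (k + 1),
        d t * compoundSeq k A B t
          = (if t = j then 0 else d t) * compoundSeq k A B t
            + (if t = j then d j * m else 0) := by
      intro t _
      by_cases h : t = j
      · subst h; simp [hmdef]
      · simp [h]
    rw [Finset.sum_congr rfl h1, Finset.sum_add_distrib,
      Finset.sum_ite_eq' (Finset.range (k + 1)) j (fun _ => d j * m),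
      if_pos (Finset.mem_range.mpr (by omega))]
  -- bounded (away from j) functions give box elements
  have hbox : ∀ d : ℕ → ℕ, (∀ i, i < j → d i < B i) → (∀ i, j < i → i ≤ k → d i < A (i - 1)) →
      ∃ c : (∀ i : Fin (k + 1), Fin (nfBound k j A B i)),
        Ψ c = ∑ t ∈ Finset.range (k + 1),
          (if t = j then 0 else d t) * compoundSeq k A B t := by
    intro d hd1 hd2
    have hb : ∀ i : Fin (k + 1), (if (i : ℕ) = j then 0 else d (i : ℕ)) < nfBound k j A B i := by
      intro i
      unfold nfBound
      rcases lt_trichotomy (i : ℕ) j with h | h | h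
      · rw [if_neg (by omega), if_pos h]
        exact hd1 _ h
      · rw [if_pos h, if_neg (by omega), if_pos h]
        omega
      · rw [if_neg (by omega), if_neg (by omega), if_neg (by omega)]
        exact hd2 _ h (by omega)
    refine ⟨fun i => ⟨if (i : ℕ) = j then 0 else d (i : ℕ), hb i⟩, ?_⟩
    rw [hΨ]
    exact hconv2 (fun t => if t = j then 0 else d t)
  -- the residue map on the box is bijective
  set ψ : (∀ i : Fin (k + 1), Fin (nfBound k j A B i)) → ZMod m :=
    fun c => ((Ψ c : ℕ) : ZMod m) with hψ
  have hsurj : Function.Surjective ψ := by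
    intro z
    have hgcd1 : (Finset.range (k + 1)).gcd (compoundSeq k A B) = 1 :=
      gcd_all_eq_one k A B hsuit _
        (fun i hi => Finset.gcd_dvd (Finset.mem_range.mpr (by omega)))
    obtain ⟨x, hx⟩ := bezout_zmod m (compoundSeq k A B) (Finset.range (k + 1))
    rw [hgcd1, Nat.cast_one] at hx
    set c0 : ℕ → ℕ := fun i => (z * x i).val with hc0def
    have hc0 : ((∑ t ∈ Finset.range (k + 1), c0 t * compoundSeq k A B t : ℕ) : ZMod m) = z := by
      push_cast
      have : ∀ t ∈ Finset.range (k + 1),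
          ((c0 t : ℕ) : ZMod m) * ((compoundSeq k A B t : ℕ) : ZMod m)
            = z * (x t * ((compoundSeq k A B t : ℕ) : ZMod m)) := by
        intro t _
        rw [hc0def]
        rw [ZMod.natCast_val, ZMod.cast_id]
        ring
      rw [Finset.sum_congr rfl this, ← Finset.mul_sum, ← hx, mul_one]
    obtain ⟨d, hd1, hd2, hd3⟩ := reduce k A B j hj hA hB c0
    obtain ⟨c, hc⟩ := hbox d hd1 hd2
    refine ⟨c, ?_⟩
    rw [hψ]
    show ((Ψ c : ℕ) : ZMod m) = z
    rw [hc]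
    have h4 := hsplit d
    rw [hd3] at h4
    have : ((∑ t ∈ Finset.range (k + 1), c0 t * compoundSeq k A B t : ℕ) : ZMod m)
        = ((∑ t ∈ Finset.range (k + 1),
            (if t = j then 0 else d t) * compoundSeq k A B t : ℕ) : ZMod m)
          + (d j : ZMod m) * ((m : ℕ) : ZMod m) := by
      rw [h4]; push_cast; ring
    rw [ZMod.natCast_self, mul_zero, add_zero] at this
    rw [← this, hc0]
  have hbij : Function.Bijective ψ := by
    rw [Fintype.bijective_iff_surjective_and_card]
    refine ⟨hsurj, ?_⟩
    rw [ZMod.card, Fintype.card_pi]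
    simp only [Fintype.card_fin]
    exact prod_nfBound k A B j hj
  set E := Equiv.ofBijective ψ hbij with hE
  set u : ℕ → ℕ := fun r => Ψ (E.symm ((r : ℕ) : ZMod m)) with hu
  have hψu : ∀ r : ℕ, ((u r : ℕ) : ZMod m) = ((r : ℕ) : ZMod m) := by
    intro r
    have := E.apply_symm_apply ((r : ℕ) : ZMod m)
    rw [hu]
    exact this
  have humod : ∀ r, r < m → u r % m = r := by
    intro r hr
    have := (ZMod.natCast_eq_natCast_iff _ _ _).mp (hψu r)
    have h2 : u r % m = r % m := this
    rw [Nat.mod_eq_of_lt hr] at h2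
    exact h2
  have hmem : ∀ c, Ψ c = u (Ψ c % m) := by
    intro c
    have h1 : (((Ψ c % m : ℕ) : ℕ) : ZMod m) = ψ c := ZMod.natCast_mod _ _
    have h2 : E.symm (((Ψ c % m : ℕ) : ℕ) : ZMod m) = c := by
      rw [h1]
      exact E.symm_apply_apply c
    rw [hu]
    show Ψ c = Ψ (E.symm _)
    rw [h2]
  -- image identification
  have himg : Finset.image Ψ Finset.univ = Finset.image u (Finset.range m) := by
    ext w
    simp only [Finset.mem_image, Finset.mem_univ, true_and, Finset.mem_range]
    constructor
    · rintro ⟨c, rfl⟩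
      exact ⟨Ψ c % m, Nat.mod_lt _ hm0, (hmem c).symm⟩
    · rintro ⟨r, hr, rfl⟩
      exact ⟨E.symm ((r : ℕ) : ZMod m), rfl⟩
  have hsum_img : ∑ n ∈ Finset.image Ψ Finset.univ, f n = ∑ r ∈ Finset.range m, f (u r) := by
    rw [himg]
    refine Finset.sum_image ?_
    intro r hr r' hr' hrr
    rw [Finset.mem_coe, Finset.mem_range] at hr hr'
    rw [← humod r hr, ← humod r' hr', hrr]
  -- representability characterization
  have hRepr : ∀ n : ℕ,
      (∃ c : Fin (k + 1) → ℕ, n = ∑ i : Fin (k + 1), c i * compoundSeq k A B (i : ℕ))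
        ↔ u (n % m) ≤ n := by
    intro n
    constructor
    · rintro ⟨c, rfl⟩
      set cext : ℕ → ℕ := fun t => if h : t < k + 1 then c ⟨t, h⟩ else 0 with hcext
      rw [hconv c]
      obtain ⟨d, hd1, hd2, hd3⟩ := reduce k A B j hj hA hB cext
      obtain ⟨e, he⟩ := hbox d hd1 hd2
      rw [← hd3, hsplit d, ← he]
      have h5 : (Ψ e + d j * m) % m = Ψ e % m := Nat.add_mul_mod_self_right _ _ _
      rw [h5, ← hmem e]
      omega
    · intro hle
      have hur : u (n % m) % m = n % m := humod _ (Nat.mod_lt _ hm0)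
      have hmod : n % m = u (n % m) % m := hur.symm
      have hdvd : m ∣ n - u (n % m) :=
        (Nat.modEq_iff_dvd' hle).mp (Nat.ModEq.symm hmod)
      obtain ⟨t, ht⟩ := hdvd
      have hn : n = u (n % m) + m * t := by omega
      set c0 := E.symm ((( n % m : ℕ) : ℕ) : ZMod m) with hc0
      have hj' : (⟨j, by omega⟩ : Fin (k + 1)) = ⟨j, by omega⟩ := rfl
      refine ⟨fun i => if (i : ℕ) = j then t else ((c0 i : ℕ)), ?_⟩
      have hterm : ∀ i : Fin (k + 1),
          (if (i : ℕ) = j then t else ((c0 i : ℕ))) * compoundSeq k A B (i : ℕ)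
            = (c0 i : ℕ) * compoundSeq k A B (i : ℕ)
              + (if i = (⟨j, by omega⟩ : Fin (k + 1)) then t * m else 0) := by
        intro i
        by_cases h : (i : ℕ) = j
        · have hi0 : (c0 i : ℕ) = 0 := by
            have h9 := (c0 i).isLt
            unfold nfBound at h9
            simp [h] at h9
            omega
          rw [if_pos h, hi0, zero_mul, zero_add,
            if_pos (by apply Fin.ext; exact h), hmdef]
          congr 1
          exact congrArg (compoundSeq k A B) h
        · rw [if_neg h, if_neg (by intro hcon; apply h; rw [hcon]), add_zero]
      rw [Finset.sum_congr rfl (fun i _ => hterm i), Finset.sum_add_distrib,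
        Finset.sum_ite_eq' Finset.univ (⟨j, by omega⟩ : Fin (k + 1)) (fun _ => t * m),
        if_pos (Finset.mem_univ _)]
      have : (∑ i : Fin (k + 1), (c0 i : ℕ) * compoundSeq k A B (i : ℕ)) = u (n % m) := rfl
      rw [this, Nat.mul_comm t m]
      omega
  -- NR characterization
  have hNRc : ∀ n : ℕ, n ∈ NR ↔ n < u (n % m) := by
    intro n
    rw [hNR n, hRepr n]
    omega
  -- the heights
  set T : ℕ → ℕ := fun r => (u r - r) / m with hT
  have hurT : ∀ r, r < m → u r = r + m * T r := by
    intro r hr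
    have h1 := Nat.div_add_mod (u r) m
    rw [humod r hr] at h1
    have h2 : u r - r = m * (u r / m) := by omega
    have h3 : T r = u r / m := by
      rw [hT]
      simp only
      rw [h2, Nat.mul_div_cancel_left _ hm0]
    rw [h3]
    omega
  -- NR as a disjoint union
  have hNReq : NR = (Finset.range m).biUnion
      (fun r => (Finset.range (T r)).image (fun t => r + m * t)) := by
    ext n
    rw [hNRc n]
    simp only [Finset.mem_biUnion, Finset.mem_image, Finset.mem_range]
    constructor
    · intro hn
      refine ⟨n % m, Nat.mod_lt _ hm0, n / m, ?_, (Nat.mod_add_div n m)⟩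
      have h1 : n = n % m + m * (n / m) := (Nat.mod_add_div n m).symm
      have h2 := hurT (n % m) (Nat.mod_lt _ hm0)
      have h3 : m * (n / m) < m * T (n % m) := by omega
      exact lt_of_mul_lt_mul_left h3 (Nat.zero_le m)
    · rintro ⟨r, hr, t, htr, rfl⟩
      have h1 : (r + m * t) % m = r := by
        rw [Nat.add_mul_mod_self_left, Nat.mod_eq_of_lt hr]
      rw [h1, hurT r hr]
      have : m * t < m * T r := (Nat.mul_lt_mul_left hm0).mpr htr
      omega
  have hdisj : (↑(Finset.range m) : Set ℕ).PairwiseDisjoint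
      (fun r => (Finset.range (T r)).image (fun t => r + m * t)) := by
    intro r hr r' hr' hne
    simp only [Finset.coe_range, Set.mem_Iio] at hr hr'
    refine Finset.disjoint_left.mpr ?_
    rintro n hn hn'
    simp only [Finset.mem_image, Finset.mem_range] at hn hn'
    obtain ⟨t, _, rfl⟩ := hn
    obtain ⟨t', _, he⟩ := hn'
    apply hne
    have h1 : (r + m * t) % m = r := by
      rw [Nat.add_mul_mod_self_left, Nat.mod_eq_of_lt hr]
    have h2 : (r' + m * t') % m = r' := by
      rw [Nat.add_mul_mod_self_left, Nat.mod_eq_of_lt hr']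
    rw [he] at h2
    omega
  -- final computation
  rw [hNReq, Finset.sum_biUnion hdisj]
  have hper : ∀ r ∈ Finset.range m,
      (∑ n ∈ (Finset.range (T r)).image (fun t => r + m * t), (f (n + m) - f n))
        = f (u r) - f r := by
    intro r hr
    rw [Finset.mem_range] at hr
    rw [Finset.sum_image (fun t _ t' _ h => by
      have : m * t = m * t' := by omega
      exact Nat.eq_of_mul_eq_mul_left hm0 this)]
    have hterm : ∀ t ∈ Finset.range (T r),
        f (r + m * t + m) - f (r + m * t)
          = f (r + m * (t + 1)) - f (r + m * t) := by
      intro t _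
      congr 2
      ring
    rw [Finset.sum_congr rfl hterm, Finset.sum_range_sub (fun t => f (r + m * t))]
    rw [← hurT r hr]
    norm_num
  rw [Finset.sum_congr rfl hper, Finset.sum_sub_distrib, hsum_img]
end
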